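/- For every nonnegative integer N, the N-th derivative of tanh satisfies ‖tanh^{(N)}‖_{L^∞(ℝ)} ≤ 4^N · N!. In particular, for β > 0 the function ν ↦ tanh(−βν/4) belongs to the Gevrey class 𝒢¹_{1,β}(ℝ). -/

import Mathlib

open Real Finset

lemma tanh_eq_div : Real.tanh = fun x => Real.sinh x / Real.cosh x :=
  funext fun x => Real.tanh_eq_sinh_div_cosh x

lemma contDiff_tanh' : ContDiff ℝ ⊤ Real.tanh := by
  rw [tanh_eq_div]
  exact Real.contDiff_sinh.div Real.contDiff_cosh fun x => (Real.cosh_pos x).ne'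

lemma hasDerivAt_tanh' (x : ℝ) : HasDerivAt Real.tanh (1 - Real.tanh x ^ 2) x := by
  have h := (Real.hasDerivAt_sinh x).div (Real.hasDerivAt_cosh x) (Real.cosh_pos x).ne'
  rw [tanh_eq_div]
  convert h using 1
  have hc := (Real.cosh_pos x).ne'
  case e'_4 => rfl
  case e'_5 => rfl
  case e'_8 => rfl
  simp only
  field_simp

lemma deriv_tanh' : deriv Real.tanh = fun x => 1 - Real.tanh x ^ 2 :=
  funext fun x => (hasDerivAt_tanh' x).deriv

lemma abs_tanh_le_one (x : ℝ) : |Real.tanh x| ≤ 1 := by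
  rw [Real.tanh_eq_sinh_div_cosh, abs_div, abs_of_pos (Real.cosh_pos x),
    div_le_one (Real.cosh_pos x)]
  have h := Real.cosh_sq_sub_sinh_sq x
  nlinarith [abs_nonneg (Real.sinh x), sq_abs (Real.sinh x), Real.cosh_pos x]

lemma tanh_iter_bound : ∀ n : ℕ, ∀ x : ℝ,
    |iteratedDeriv n Real.tanh x| ≤ (4 : ℝ) ^ n * Nat.factorial n := by
  intro n
  induction n using Nat.strong_induction_on with
  | _ n ih =>
  match n with
  | 0 => intro x; simpa using abs_tanh_le_one x
  | (m + 1) =>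
    intro x
    rw [iteratedDeriv_succ', deriv_tanh']
    -- rewrite 1 - tanh^2 as 1 + (-(tanh * tanh))
    have hfun : (fun y : ℝ => 1 - Real.tanh y ^ 2)
        = fun y => 1 + (-(Real.tanh y * Real.tanh y)) := by
      funext y; ring
    rw [hfun]
    match m with
    | 0 =>
      simp only [iteratedDeriv_zero]
      have := abs_tanh_le_one x
      have h2 : |Real.tanh x * Real.tanh x| ≤ 1 := by
        rw [abs_mul]; nlinarith [abs_nonneg (Real.tanh x)]
      calc |1 + -(Real.tanh x * Real.tanh x)| ≤ 1 + 1 := by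
            calc |1 + -(Real.tanh x * Real.tanh x)| ≤ |(1:ℝ)| + |-(Real.tanh x * Real.tanh x)| :=
                abs_add_le _ _
            _ ≤ 1 + 1 := by rw [abs_one, abs_neg]; linarith
        _ ≤ (4:ℝ) ^ 1 * Nat.factorial 1 := by norm_num
    | (k + 1) =>
      -- drop constant and negation
      have hconst : iteratedDeriv (k + 1) (fun y : ℝ => 1 + (-(Real.tanh y * Real.tanh y))) x
          = iteratedDeriv (k + 1) (fun y : ℝ => -(Real.tanh y * Real.tanh y)) x := by
        simp only [← iteratedDerivWithin_univ]
        exact iteratedDerivWithin_const_add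
          (Nat.succ_pos k) 1
      rw [hconst, show (fun y : ℝ => -(Real.tanh y * Real.tanh y)) = -(fun y => Real.tanh y * Real.tanh y) from rfl, iteratedDeriv_neg, abs_neg]
      -- Leibniz bound
      have hmul := norm_iteratedFDeriv_mul_le (𝕜 := ℝ)
        (contDiff_tanh'.of_le le_top) (contDiff_tanh'.of_le le_top) x
        (le_refl ((k + 1 : ℕ) : WithTop ℕ∞))
      rw [norm_iteratedFDeriv_eq_norm_iteratedDeriv, Real.norm_eq_abs] at hmul
      have hterm : ∀ i ∈ Finset.range (k + 1 + 1),
          ((k+1).choose i : ℝ) * ‖iteratedFDeriv ℝ i Real.tanh x‖ *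
            ‖iteratedFDeriv ℝ (k + 1 - i) Real.tanh x‖
          ≤ (4:ℝ) ^ (k + 1) * Nat.factorial (k + 1) := by
        intro i hi
        rw [Finset.mem_range] at hi
        have hi' : i ≤ k + 1 := Nat.lt_succ_iff.mp hi
        rw [norm_iteratedFDeriv_eq_norm_iteratedDeriv,
          norm_iteratedFDeriv_eq_norm_iteratedDeriv, Real.norm_eq_abs, Real.norm_eq_abs]
        have h1 := ih i (by omega) x
        have h2 := ih (k + 1 - i) (by omega) x
        have hnn1 : (0:ℝ) ≤ |iteratedDeriv i Real.tanh x| := abs_nonneg _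
        have hnn2 : (0:ℝ) ≤ |iteratedDeriv (k+1-i) Real.tanh x| := abs_nonneg _
        have hc : (0:ℝ) ≤ ((k+1).choose i : ℝ) := Nat.cast_nonneg _
        calc ((k+1).choose i : ℝ) * |iteratedDeriv i Real.tanh x| *
              |iteratedDeriv (k + 1 - i) Real.tanh x|
            ≤ ((k+1).choose i : ℝ) * ((4:ℝ)^i * Nat.factorial i) *
              ((4:ℝ)^(k+1-i) * Nat.factorial (k+1-i)) := by
              apply mul_le_mul
              · exact mul_le_mul_of_nonneg_left h1 hc
              · exact h2
              · exact hnn2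
              · positivity
          _ = ((4:ℝ)^i * (4:ℝ)^(k+1-i)) *
              (((k+1).choose i : ℝ) * Nat.factorial i * Nat.factorial (k+1-i)) := by ring
          _ = (4:ℝ) ^ (k + 1) *
              (((k+1).choose i : ℝ) * Nat.factorial i * Nat.factorial (k+1-i)) := by
              rw [← pow_add, Nat.add_sub_cancel' hi']
          _ = (4:ℝ) ^ (k + 1) * Nat.factorial (k + 1) := by
              congr 1
              rw [← Nat.cast_mul, ← Nat.cast_mul, ← Nat.choose_mul_factorial_mul_factorial hi']
      have hsum : ∑ i ∈ Finset.range (k + 1 + 1),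
          ((k+1).choose i : ℝ) * ‖iteratedFDeriv ℝ i Real.tanh x‖ *
            ‖iteratedFDeriv ℝ (k + 1 - i) Real.tanh x‖
          ≤ (k + 2 : ℝ) * ((4:ℝ) ^ (k + 1) * Nat.factorial (k + 1)) := by
        calc _ ≤ ∑ _i ∈ Finset.range (k + 1 + 1),
              (4:ℝ) ^ (k + 1) * Nat.factorial (k + 1) := Finset.sum_le_sum hterm
          _ = (k + 2 : ℝ) * ((4:ℝ) ^ (k + 1) * Nat.factorial (k + 1)) := by
              rw [Finset.sum_const, Finset.card_range]; ring
      have := le_trans hmul hsum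
      calc |iteratedDeriv (k + 1) (fun y : ℝ => Real.tanh y * Real.tanh y) x|
          ≤ (k + 2 : ℝ) * ((4:ℝ) ^ (k + 1) * Nat.factorial (k + 1)) := this
        _ ≤ (4:ℝ) ^ (k + 1 + 1) * Nat.factorial (k + 1 + 1) := by
            have heq : (4:ℝ) ^ (k + 1 + 1) * Nat.factorial (k + 1 + 1)
                = 4 * ((k + 2 : ℝ) * ((4:ℝ) ^ (k + 1) * Nat.factorial (k + 1))) := by
              rw [pow_succ, Nat.factorial_succ]
              push_cast
              ring
            have hA : (0:ℝ) ≤ (k + 2 : ℝ) * ((4:ℝ) ^ (k + 1) * Nat.factorial (k + 1)) := by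
              positivity
            rw [heq]
            linarith

theorem stmt_15 :
    (∀ (n : ℕ) (x : ℝ),
      |iteratedDeriv n Real.tanh x| ≤ (4 : ℝ) ^ n * Nat.factorial n) ∧
    ∀ (β : ℝ), 0 < β → ∀ (k : ℕ) (x : ℝ),
      |iteratedDeriv k (fun ν : ℝ => Real.tanh (-β * ν / 4)) x| ≤
        1 * β ^ k * Nat.factorial k := by
  constructor
  · exact tanh_iter_bound
  · intro β hβ k x
    have hfun : (fun ν : ℝ => Real.tanh (-β * ν / 4))
        = fun ν : ℝ => Real.tanh ((-β / 4) * ν) := by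
      funext ν; ring_nf
    rw [hfun, iteratedDeriv_comp_const_mul (contDiff_tanh'.of_le le_top) (-β/4)]
    rw [abs_mul, abs_pow, abs_div, abs_neg]
    have h := tanh_iter_bound k ((-β/4) * x)
    calc (|β| / |4|) ^ k * |iteratedDeriv k Real.tanh (-β / 4 * x)|
        ≤ (β / 4) ^ k * ((4:ℝ)^k * Nat.factorial k) := by
          rw [abs_of_pos hβ]
          norm_num
          apply mul_le_mul_of_nonneg_left h
          positivity
      _ = 1 * β ^ k * Nat.factorial k := by
          have h4 : ((4:ℝ))^k ≠ 0 := by positivity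
          field_simp
          rw [← mul_pow]; norm_num
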